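/- Assume g satisfies conditions (A1)–(A3) on (a,b), let F be the distribution function with density p(y) = c₁ e^{−G(y)} on (a,b), and for z ∈ (a,b) let f_z be the Stein solution defined by f_z(w) = F(w)(1 − F(z))/p(w) for w ≤ z and f_z(w) = F(z)(1 − F(w))/p(w) for w > z. Then 0 ≤ f_z(w) ≤ 1/c₁ for all w ∈ (a,b). -/

import Mathlib

set_option maxHeartbeats 1000000


open MeasureTheory Filter Set

/-- The open interval `(a, b) ⊆ ℝ` determined by extended-real endpoints. -/
def strip (a b : EReal) : Set ℝ := {x : ℝ | a < (x : EReal) ∧ (x : EReal) < b}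

/-- The density `p(y) = c₁ e^{-G(y)}`, `G(y) = ∫_{w₀}^y g`. -/
noncomputable def steinPdf (g : ℝ → ℝ) (w₀ c₁ : ℝ) (y : ℝ) : ℝ :=
  c₁ * Real.exp (-(∫ t in w₀..y, g t))

/-- The distribution function `F` with density `p` on `(a, b)`. -/
noncomputable def steinCDF (g : ℝ → ℝ) (a b : EReal) (w₀ c₁ : ℝ) (w : ℝ) : ℝ :=
  ∫ y in strip a b ∩ Set.Iic w, steinPdf g w₀ c₁ y

/-- The Stein solution `f_z`: `f_z(w) = F(w)(1-F(z))/p(w)` for `w ≤ z`, and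
`f_z(w) = F(z)(1-F(w))/p(w)` for `w > z`. -/
noncomputable def steinSol (g : ℝ → ℝ) (a b : EReal) (w₀ c₁ : ℝ) (z w : ℝ) : ℝ :=
  if w ≤ z then steinCDF g a b w₀ c₁ w * (1 - steinCDF g a b w₀ c₁ z) / steinPdf g w₀ c₁ w
  else steinCDF g a b w₀ c₁ z * (1 - steinCDF g a b w₀ c₁ w) / steinPdf g w₀ c₁ w

namespace SteinAux

variable {a b : EReal} {g : ℝ → ℝ} {w₀ c₁ : ℝ}

lemma mem_strip_between {x y t : ℝ} (hx : x ∈ strip a b) (hy : y ∈ strip a b)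
    (h1 : x ≤ t) (h2 : t ≤ y) : t ∈ strip a b :=
  ⟨lt_of_lt_of_le hx.1 (EReal.coe_le_coe_iff.2 h1),
   lt_of_le_of_lt (EReal.coe_le_coe_iff.2 h2) hy.2⟩

lemma strip_uIcc_subset {x y : ℝ} (hx : x ∈ strip a b) (hy : y ∈ strip a b) :
    Set.uIcc x y ⊆ strip a b := by
  intro t ht
  rcases le_total x y with h | h
  · rw [Set.uIcc_of_le h] at ht; exact mem_strip_between hx hy ht.1 ht.2
  · rw [Set.uIcc_of_ge h] at ht; exact mem_strip_between hy hx ht.1 ht.2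

lemma strip_measurableSet (a b : EReal) : MeasurableSet (strip a b) := by
  have : strip a b = (fun x : ℝ => (x : EReal)) ⁻¹' (Set.Ioo a b) := rfl
  rw [this]
  exact measurable_coe_real_ereal measurableSet_Ioo

lemma steinPdf_pos (hc₁ : 0 < c₁) (y : ℝ) : 0 < steinPdf g w₀ c₁ y :=
  mul_pos hc₁ (Real.exp_pos _)

lemma steinPdf_integrableOn (hnorm : ∫ y in strip a b, steinPdf g w₀ c₁ y = 1) :
    IntegrableOn (steinPdf g w₀ c₁) (strip a b) := by
  by_contra h
  rw [MeasureTheory.integral_undef h] at hnorm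
  exact one_ne_zero hnorm.symm

/-- Bound a set integral of the pdf by `K`, via a shift `y ↦ y + c` mapping the set
into the strip, together with the pointwise bound `p y ≤ K * p (y + c)`. -/
lemma setIntegral_pdf_le (hc₁ : 0 < c₁)
    (hnorm : ∫ y in strip a b, steinPdf g w₀ c₁ y = 1)
    {T : Set ℝ} (hTm : MeasurableSet T) (hTS : T ⊆ strip a b)
    {c K : ℝ} (hK : 0 ≤ K)
    (himg : ∀ y ∈ T, y + c ∈ strip a b)
    (hpt : ∀ y ∈ T, steinPdf g w₀ c₁ y ≤ K * steinPdf g w₀ c₁ (y + c)) :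
    ∫ y in T, steinPdf g w₀ c₁ y ≤ K := by
  set p := steinPdf g w₀ c₁ with hp
  have hp_int : IntegrableOn p (strip a b) := steinPdf_integrableOn hnorm
  have hsub : (fun y => y + c) '' T ⊆ strip a b := by
    rintro _ ⟨y, hy, rfl⟩; exact himg y hy
  have emb : MeasurableEmbedding (fun y : ℝ => y + c) := measurableEmbedding_addRight c
  have mp : MeasurePreserving (fun y : ℝ => y + c) volume volume :=
    measurePreserving_add_right volume c
  have h1 : IntegrableOn p ((fun y => y + c) '' T) volume := hp_int.mono_set hsub
  have h2 : IntegrableOn (p ∘ (fun y : ℝ => y + c)) T volume :=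
    (MeasurePreserving.integrable_comp_emb (mp.restrict_image_emb emb T) emb).2 h1
  have hp_nonneg : ∀ y, 0 ≤ p y := fun y => (steinPdf_pos hc₁ y).le
  calc ∫ y in T, p y ≤ ∫ y in T, K * (p ∘ fun y : ℝ => y + c) y :=
        setIntegral_mono_on (hp_int.mono_set hTS) (h2.const_mul K) hTm (fun y hy => hpt y hy)
    _ = K * ∫ y in T, (p ∘ fun y : ℝ => y + c) y := by rw [MeasureTheory.integral_const_mul]
    _ = K * ∫ u in (fun y : ℝ => y + c) '' T, p u := by
        congr 1
        exact (mp.setIntegral_image_emb emb p T).symm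
    _ ≤ K * ∫ u in strip a b, p u := by
        refine mul_le_mul_of_nonneg_left ?_ hK
        exact setIntegral_mono_set hp_int
          (Filter.Eventually.of_forall fun y => hp_nonneg y)
          (HasSubset.Subset.eventuallyLE hsub)
    _ = K := by rw [hnorm, mul_one]

lemma intervalIntegrable_of_strip (hg_cont : ContinuousOn g (strip a b))
    {x y : ℝ} (hx : x ∈ strip a b) (hy : y ∈ strip a b) :
    IntervalIntegrable g volume x y :=
  (hg_cont.mono (strip_uIcc_subset hx hy)).intervalIntegrable

/-- Key convexity inequality: `G(w) + G(y + (w₀ - w)) ≤ G(y)` for `y ≤ w ≤ w₀`. -/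
lemma G_ineq_left (hg_mono : MonotoneOn g (strip a b)) (hg_cont : ContinuousOn g (strip a b))
    (hw₀ : w₀ ∈ strip a b) {y w : ℝ} (hy : y ∈ strip a b) (hw : w ∈ strip a b)
    (hyw : y ≤ w) (hww₀ : w ≤ w₀) :
    (∫ t in w₀..w, g t) + (∫ t in w₀..(y + (w₀ - w)), g t) ≤ ∫ t in w₀..y, g t := by
  have hΔ : (0:ℝ) ≤ w₀ - w := sub_nonneg.2 hww₀
  have hyΔ : y + (w₀ - w) ∈ strip a b :=
    mem_strip_between hy hw₀ (le_add_of_nonneg_right hΔ) (by linarith)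
  have hadj : (∫ t in w₀..y, g t) + ∫ t in y..w, g t = ∫ t in w₀..w, g t :=
    intervalIntegral.integral_add_adjacent_intervals
      (intervalIntegrable_of_strip hg_cont hw₀ hy)
      (intervalIntegrable_of_strip hg_cont hy hw)
  have hcomp : (∫ t in y..w, g (t + (w₀ - w))) = ∫ t in (y + (w₀ - w))..w₀, g t := by
    rw [intervalIntegral.integral_comp_add_right g (w₀ - w)]
    norm_num
  have hadj2 : (∫ t in w₀..(y + (w₀ - w)), g t) + ∫ t in (y + (w₀ - w))..w₀, g t = 0 := by
    rw [intervalIntegral.integral_add_adjacent_intervals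
      (intervalIntegrable_of_strip hg_cont hw₀ hyΔ)
      (intervalIntegrable_of_strip hg_cont hyΔ hw₀)]
    exact intervalIntegral.integral_same
  have hint' : IntervalIntegrable (fun t => g (t + (w₀ - w))) volume y w := by
    have := (intervalIntegrable_of_strip hg_cont hyΔ hw₀).comp_add_right (w₀ - w)
    have e1 : y + (w₀ - w) - (w₀ - w) = y := by ring
    have e2 : w₀ - (w₀ - w) = w := by ring
    rwa [e1, e2] at this
  have hmono_int : (∫ t in y..w, g t) ≤ ∫ t in y..w, g (t + (w₀ - w)) := by
    refine intervalIntegral.integral_mono_on hyw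
      (intervalIntegrable_of_strip hg_cont hy hw) hint' ?_
    intro t ht
    have ht1 : t ∈ strip a b := mem_strip_between hy hw ht.1 ht.2
    have ht2 : t + (w₀ - w) ∈ strip a b :=
      mem_strip_between ht1 hw₀ (le_add_of_nonneg_right hΔ) (by linarith [ht.2])
    exact hg_mono ht1 ht2 (le_add_of_nonneg_right hΔ)
  rw [hcomp] at hmono_int
  linarith

/-- Mirror image: `G(w) + G(y + (w₀ - w)) ≤ G(y)` for `w₀ ≤ w ≤ y`. -/
lemma G_ineq_right (hg_mono : MonotoneOn g (strip a b)) (hg_cont : ContinuousOn g (strip a b))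
    (hw₀ : w₀ ∈ strip a b) {y w : ℝ} (hy : y ∈ strip a b) (hw : w ∈ strip a b)
    (hwy : w ≤ y) (hww₀ : w₀ ≤ w) :
    (∫ t in w₀..w, g t) + (∫ t in w₀..(y + (w₀ - w)), g t) ≤ ∫ t in w₀..y, g t := by
  have hΔ : w₀ - w ≤ 0 := sub_nonpos.2 hww₀
  have hyΔ : y + (w₀ - w) ∈ strip a b :=
    mem_strip_between hw₀ hy (by linarith) (by linarith)
  have hadj : (∫ t in w₀..w, g t) + ∫ t in w..y, g t = ∫ t in w₀..y, g t :=
    intervalIntegral.integral_add_adjacent_intervals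
      (intervalIntegrable_of_strip hg_cont hw₀ hw)
      (intervalIntegrable_of_strip hg_cont hw hy)
  have hcomp : (∫ t in w..y, g (t + (w₀ - w))) = ∫ t in w₀..(y + (w₀ - w)), g t := by
    rw [intervalIntegral.integral_comp_add_right g (w₀ - w)]
    norm_num
  have hint' : IntervalIntegrable (fun t => g (t + (w₀ - w))) volume w y := by
    have := (intervalIntegrable_of_strip hg_cont hw₀ hyΔ).comp_add_right (w₀ - w)
    have e1 : w₀ - (w₀ - w) = w := by ring
    have e2 : y + (w₀ - w) - (w₀ - w) = y := by ring
    rwa [e1, e2] at this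
  have hmono_int : (∫ t in w..y, g (t + (w₀ - w))) ≤ ∫ t in w..y, g t := by
    refine intervalIntegral.integral_mono_on hwy hint'
      (intervalIntegrable_of_strip hg_cont hw hy) ?_
    intro t ht
    have ht1 : t ∈ strip a b := mem_strip_between hw hy ht.1 ht.2
    have ht2 : t + (w₀ - w) ∈ strip a b :=
      mem_strip_between hw₀ ht1 (by linarith [ht.1]) (by linarith)
    exact hg_mono ht2 ht1 (by linarith)
  rw [hcomp] at hmono_int
  linarith

/-- `F(w) ≤ e^{-G(w)}` for `w ≤ w₀`. -/
lemma cdf_le (hw₀ : w₀ ∈ strip a b) (hc₁ : 0 < c₁)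
    (hnorm : ∫ y in strip a b, steinPdf g w₀ c₁ y = 1)
    (hg_mono : MonotoneOn g (strip a b)) (hg_cont : ContinuousOn g (strip a b))
    {w : ℝ} (hw : w ∈ strip a b) (hww₀ : w ≤ w₀) :
    steinCDF g a b w₀ c₁ w ≤ Real.exp (-(∫ t in w₀..w, g t)) := by
  refine setIntegral_pdf_le hc₁ hnorm
    ((strip_measurableSet a b).inter measurableSet_Iic) Set.inter_subset_left
    (Real.exp_pos _).le (c := w₀ - w) ?_ ?_
  · rintro y ⟨hyS, hyw⟩
    exact mem_strip_between hyS hw₀ (le_add_of_nonneg_right (by linarith))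
      (by simp only [Set.mem_Iic] at hyw; linarith)
  · rintro y ⟨hyS, hyw⟩
    simp only [Set.mem_Iic] at hyw
    have key := G_ineq_left hg_mono hg_cont hw₀ hyS hw hyw hww₀
    unfold steinPdf
    rw [mul_comm (Real.exp _) (c₁ * _), mul_assoc, ← Real.exp_add]
    refine mul_le_mul_of_nonneg_left (Real.exp_le_exp.2 ?_) hc₁.le
    linarith

/-- `1 - F(w) ≤ e^{-G(w)}` for `w₀ ≤ w`. -/
lemma one_sub_cdf_le (hw₀ : w₀ ∈ strip a b) (hc₁ : 0 < c₁)
    (hnorm : ∫ y in strip a b, steinPdf g w₀ c₁ y = 1)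
    (hg_mono : MonotoneOn g (strip a b)) (hg_cont : ContinuousOn g (strip a b))
    {w : ℝ} (hw : w ∈ strip a b) (hww₀ : w₀ ≤ w) :
    1 - steinCDF g a b w₀ c₁ w ≤ Real.exp (-(∫ t in w₀..w, g t)) := by
  have hp_int : IntegrableOn (steinPdf g w₀ c₁) (strip a b) := steinPdf_integrableOn hnorm
  have hsplit : steinCDF g a b w₀ c₁ w
      + ∫ y in strip a b ∩ Set.Ioi w, steinPdf g w₀ c₁ y = 1 := by
    rw [← hnorm]
    unfold steinCDF
    rw [← MeasureTheory.setIntegral_union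
      (Set.disjoint_left.2 (by rintro x ⟨-, h1⟩ ⟨-, h2⟩; exact absurd (show x ≤ w from h1) (not_le.2 h2)))
      ((strip_measurableSet a b).inter measurableSet_Ioi)
      (hp_int.mono_set Set.inter_subset_left)
      (hp_int.mono_set Set.inter_subset_left)]
    rw [← Set.inter_union_distrib_left, Set.Iic_union_Ioi, Set.inter_univ]
  have hmain : (∫ y in strip a b ∩ Set.Ioi w, steinPdf g w₀ c₁ y)
      ≤ Real.exp (-(∫ t in w₀..w, g t)) := by
    refine setIntegral_pdf_le hc₁ hnorm
      ((strip_measurableSet a b).inter measurableSet_Ioi) Set.inter_subset_left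
      (Real.exp_pos _).le (c := w₀ - w) ?_ ?_
    · rintro y ⟨hyS, hyw⟩
      simp only [Set.mem_Ioi] at hyw
      exact mem_strip_between hw₀ hyS (by linarith) (by linarith)
    · rintro y ⟨hyS, hyw⟩
      simp only [Set.mem_Ioi] at hyw
      have key := G_ineq_right hg_mono hg_cont hw₀ hyS hw hyw.le hww₀
      unfold steinPdf
      rw [mul_comm (Real.exp _) (c₁ * _), mul_assoc, ← Real.exp_add]
      refine mul_le_mul_of_nonneg_left (Real.exp_le_exp.2 ?_) hc₁.le
      linarith
  linarith

end SteinAux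

open SteinAux in
/-- Lemma 4.1, (4.3): `0 ≤ f_z(w) ≤ 1/c₁` for all `w ∈ (a,b)`. -/
theorem steinSol_nonneg_le
    (a b : EReal) (hab : a < b) (g : ℝ → ℝ) (w₀ c₁ : ℝ)
    (hw₀ : w₀ ∈ strip a b) (hc₁ : 0 < c₁)
    (hnorm : ∫ y in strip a b, steinPdf g w₀ c₁ y = 1)
    -- condition (A1)
    (hg_mono : MonotoneOn g (strip a b))
    (hg_sign : ∀ w ∈ strip a b, 0 ≤ (w - w₀) * g w)
    -- condition (A2)
    (hg_diff : ∀ w ∈ strip a b, DifferentiableAt ℝ g w)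
    (hg'_diff : ∀ w ∈ strip a b, DifferentiableAt ℝ (deriv g) w)
    (hg'_cont : ContinuousOn (deriv g) (strip a b))
    (hg_ineq : ∀ w ∈ strip a b, 0 ≤ 2 * (deriv g w) ^ 2 - g w * deriv (deriv g) w)
    -- condition (A3)
    (hlim_a : Tendsto (fun y => g y * steinPdf g w₀ c₁ y)
      (Filter.comap (fun x : ℝ => (x : EReal)) (nhdsWithin a (Set.Ioi a))) (nhds 0))
    (hlim_b : Tendsto (fun y => g y * steinPdf g w₀ c₁ y)
      (Filter.comap (fun x : ℝ => (x : EReal)) (nhdsWithin b (Set.Iio b))) (nhds 0))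
    (z : ℝ) (hz : z ∈ strip a b) :
    ∀ w ∈ strip a b, 0 ≤ steinSol g a b w₀ c₁ z w ∧ steinSol g a b w₀ c₁ z w ≤ 1 / c₁ := by
  intro w hw
  have hg_cont : ContinuousOn g (strip a b) := fun x hx =>
    (hg_diff x hx).continuousAt.continuousWithinAt
  have hp_int : IntegrableOn (steinPdf g w₀ c₁) (strip a b) := steinPdf_integrableOn hnorm
  have hp_nonneg : ∀ y, (0:ℝ) ≤ steinPdf g w₀ c₁ y := fun y => (steinPdf_pos hc₁ y).le
  set F := steinCDF g a b w₀ c₁ with hF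
  have Fnn : ∀ v, 0 ≤ F v := fun v =>
    MeasureTheory.setIntegral_nonneg ((strip_measurableSet a b).inter measurableSet_Iic)
      (fun y _ => hp_nonneg y)
  have Fle1 : ∀ v, F v ≤ 1 := by
    intro v
    rw [← hnorm]
    exact setIntegral_mono_set hp_int
      (Filter.Eventually.of_forall fun y => hp_nonneg y)
      (HasSubset.Subset.eventuallyLE Set.inter_subset_left)
  have Fmono : ∀ {u v : ℝ}, u ≤ v → F u ≤ F v := by
    intro u v huv
    exact setIntegral_mono_set (hp_int.mono_set Set.inter_subset_left)
      (Filter.Eventually.of_forall fun y => hp_nonneg y)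
      (HasSubset.Subset.eventuallyLE
        (Set.inter_subset_inter_right _ (Set.Iic_subset_Iic.2 huv)))
  set E := Real.exp (-(∫ t in w₀..w, g t)) with hE
  have hpw : steinPdf g w₀ c₁ w = c₁ * E := rfl
  have hEpos : 0 < E := Real.exp_pos _
  -- the numerator bound
  have hnum : ∀ u v : ℝ, u ≤ v →
      (u = w ∨ v = w) → F u * (1 - F v) ≤ E := by
    intro u v huv hcase
    rcases le_total w w₀ with hwl | hwr
    · -- use F u ≤ F w ≤ E
      have hFw : F w ≤ E := cdf_le hw₀ hc₁ hnorm hg_mono hg_cont hw hwl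
      have hFu : F u ≤ E := by
        rcases hcase with rfl | rfl
        · exact hFw
        · exact le_trans (Fmono huv) hFw
      calc F u * (1 - F v) ≤ F u * 1 :=
            mul_le_mul_of_nonneg_left (by linarith [Fnn v]) (Fnn u)
        _ = F u := mul_one _
        _ ≤ E := hFu
    · -- use 1 - F v ≤ 1 - F w ≤ E
      have hFw : 1 - F w ≤ E := one_sub_cdf_le hw₀ hc₁ hnorm hg_mono hg_cont hw hwr
      have hFv : 1 - F v ≤ E := by
        rcases hcase with rfl | rfl
        · linarith [Fmono huv]
        · exact hFw
      calc F u * (1 - F v) ≤ 1 * (1 - F v) :=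
            mul_le_mul_of_nonneg_right (Fle1 u) (by linarith [Fle1 v])
        _ = 1 - F v := one_mul _
        _ ≤ E := hFv
  have hdiv : ∀ X : ℝ, X ≤ E → X / steinPdf g w₀ c₁ w ≤ 1 / c₁ := by
    intro X hXE
    rw [hpw, div_le_div_iff₀ (by positivity) hc₁]
    nlinarith
  unfold steinSol
  split_ifs with h
  · constructor
    · exact div_nonneg (mul_nonneg (Fnn w) (by linarith [Fle1 z])) (hp_nonneg w)
    · exact hdiv _ (hnum w z h (Or.inl rfl))
  · push_neg at h
    constructor
    · exact div_nonneg (mul_nonneg (Fnn z) (by linarith [Fle1 w])) (hp_nonneg w)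
    · exact hdiv _ (hnum z w h.le (Or.inr rfl))
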